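/- Let G be a directed graph on k vertices v_1,...,v_k with adjacency matrix A(G) = (a_{ij}) over F_2, where a_{ij} = 1 iff there is an edge from v_i to v_j (i ≠ j) and a_{ii} = 0. Let d_i = Σ_j a_{ij} mod 2 and let L(G) = diag(d_1,...,d_k) + A(G) be the Laplace matrix over F_2. If r = rank_{F_2} L(G), then the number of even partitions of G equals 2^{k-r}. In particular, G is odd (its only even partitions are the trivial ones (V,∅) and (∅,V)) if and only if r = k-1. -/

import Mathlib

open Classical


lemma aux_two_le_card {α : Type*} [Finite α] (a b : α) (hab : a ≠ b) :
    2 ≤ Nat.card α := by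
  classical
  haveI := Fintype.ofFinite α
  rw [Nat.card_eq_fintype_card, ← Finset.card_univ]
  have h2 : ({a, b} : Finset α).card = 2 := by
    rw [Finset.card_insert_of_notMem (by simp [hab]), Finset.card_singleton]
  rw [← h2]
  exact Finset.card_le_card (Finset.subset_univ _)

lemma aux_three_le_card {α : Type*} [Finite α] (a b c : α) (hab : a ≠ b)
    (hac : a ≠ c) (hbc : b ≠ c) : 3 ≤ Nat.card α := by
  classical
  haveI := Fintype.ofFinite α
  rw [Nat.card_eq_fintype_card, ← Finset.card_univ]
  have h3 : ({a, b, c} : Finset α).card = 3 := by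
    rw [Finset.card_insert_of_notMem (by simp [hab, hac]),
      Finset.card_insert_of_notMem (by simp [hbc]), Finset.card_singleton]
  rw [← h3]
  exact Finset.card_le_card (Finset.subset_univ _)

lemma aux_card_le_two {α : Type*} [Finite α] (a b : α) (h : ∀ x, x = a ∨ x = b) :
    Nat.card α ≤ 2 := by
  classical
  haveI := Fintype.ofFinite α
  rw [Nat.card_eq_fintype_card, ← Finset.card_univ]
  have hsub : (Finset.univ : Finset α) ⊆ {a, b} := fun x _ => by
    rcases h x with h | h <;> simp [h]
  calc Finset.univ.card ≤ ({a, b} : Finset α).card := Finset.card_le_card hsub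
    _ ≤ 2 := by
        apply le_trans (Finset.card_insert_le _ _); simp

/-- The number of even partitions of a directed graph G on k vertices equals
2^(k - r) where r is the F_2-rank of the Laplace matrix L(G); in particular G is odd
iff r = k - 1. Partitions (S, T) are encoded by the set S, with T the complement. -/
theorem even_partitions_card_eq_two_pow (k : ℕ) (Adj : Fin k → Fin k → Prop)
    (hirr : ∀ v, ¬ Adj v v)
    (A : Matrix (Fin k) (Fin k) (ZMod 2))
    (hA : ∀ i j, A i j = if Adj i j then 1 else 0)
    (L : Matrix (Fin k) (Fin k) (ZMod 2))
    (hL : L = Matrix.diagonal (fun i => ∑ j, A i j) + A)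
    (r : ℕ) (hr : r = L.rank) :
    Nat.card {S : Finset (Fin k) //
      (∀ v ∈ S, Even (Nat.card {w : Fin k // w ∉ S ∧ Adj v w})) ∧
      (∀ v ∉ S, Even (Nat.card {w : Fin k // w ∈ S ∧ Adj v w}))} = 2 ^ (k - r) ∧
    ((∀ S : Finset (Fin k),
        ((∀ v ∈ S, Even (Nat.card {w : Fin k // w ∉ S ∧ Adj v w})) ∧
         (∀ v ∉ S, Even (Nat.card {w : Fin k // w ∈ S ∧ Adj v w}))) →
        S = ∅ ∨ S = Finset.univ) ↔ r = k - 1) := by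
  -- abbreviation for the even-partition predicate
  set P : Finset (Fin k) → Prop := fun S =>
    (∀ v ∈ S, Even (Nat.card {w : Fin k // w ∉ S ∧ Adj v w})) ∧
    (∀ v ∉ S, Even (Nat.card {w : Fin k // w ∈ S ∧ Adj v w})) with hPdef
  -- evenness of cardinal in terms of sums in ZMod 2
  have even_iff : ∀ (p : Fin k → Prop),
      (Even (Nat.card {w : Fin k // p w}) ↔ (∑ w, if p w then (1:ZMod 2) else 0) = 0) := by
    intro p
    rw [Finset.sum_boole, Nat.card_eq_fintype_card, Fintype.card_subtype,
      ZMod.natCast_eq_zero_iff, even_iff_two_dvd]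
  -- indicator map
  set φ : Finset (Fin k) → (Fin k → ZMod 2) := fun S j => if j ∈ S then 1 else 0 with hφdef
  have key : ∀ S : Finset (Fin k), P S ↔ L.mulVec (φ S) = 0 := by
    intro S
    have hv : ∀ v, L.mulVec (φ S) v =
        (if v ∈ S then (∑ j, if j ∉ S ∧ Adj v j then (1:ZMod 2) else 0)
          else (∑ j, if j ∈ S ∧ Adj v j then 1 else 0)) := by
      intro v
      have hsum : ∀ j, L v j * φ S j =
          (Matrix.diagonal (fun i => ∑ j, A i j) v j) * φ S j + (if j ∈ S ∧ Adj v j then 1 else 0) := by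
        intro j
        rw [hL]
        simp only [Matrix.add_apply, add_mul, hφdef, hA]
        by_cases h1 : j ∈ S <;> by_cases h2 : Adj v j <;> simp [h1, h2]
      rw [Matrix.mulVec, dotProduct]
      rw [Finset.sum_congr rfl (fun j _ => hsum j), Finset.sum_add_distrib]
      have hdiag : (∑ j, (Matrix.diagonal (fun i => ∑ j, A i j) v j) * φ S j)
          = (∑ j, A v j) * φ S v := by
        rw [Finset.sum_eq_single_of_mem v (Finset.mem_univ v)
          (fun b _ hb => by simp [Matrix.diagonal_apply_ne _ (Ne.symm hb)])]
        simp [Matrix.diagonal_apply_eq]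
      rw [hdiag]
      by_cases hvS : v ∈ S
      · simp only [hvS, if_pos, hφdef, if_pos hvS, mul_one]
        rw [← Finset.sum_add_distrib]
        apply Finset.sum_congr rfl
        intro j _
        rw [hA]
        by_cases h1 : j ∈ S <;> by_cases h2 : Adj v j <;> simp [h1, h2] <;> decide
      · simp only [hvS, if_neg, hφdef, if_neg hvS, mul_zero, zero_add, if_false]
    constructor
    · rintro ⟨h1, h2⟩
      funext v
      rw [hv v, Pi.zero_apply]
      by_cases hvS : v ∈ S
      · rw [if_pos hvS]
        have := (even_iff (fun w => w ∉ S ∧ Adj v w)).mp (h1 v hvS)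
        convert this using 2; split_ifs <;> rfl
      · rw [if_neg hvS]
        have := (even_iff (fun w => w ∈ S ∧ Adj v w)).mp (h2 v hvS)
        convert this using 2; split_ifs <;> rfl
    · intro h
      constructor
      · intro v hvS
        rw [even_iff]
        have := congrFun h v
        rw [hv v, if_pos hvS, Pi.zero_apply] at this
        convert this using 2; split_ifs <;> rfl
      · intro v hvS
        rw [even_iff]
        have := congrFun h v
        rw [hv v, if_neg hvS, Pi.zero_apply] at this
        convert this using 2; split_ifs <;> rfl
  -- the bijection between Finsets and vectors
  have hval : ∀ x : ZMod 2, (if x = 1 then (1:ZMod 2) else 0) = x := by decide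
  let e : Finset (Fin k) ≃ (Fin k → ZMod 2) :=
    { toFun := φ
      invFun := fun f => Finset.univ.filter (fun j => f j = 1)
      left_inv := by
        intro S; ext j
        by_cases h : j ∈ S <;> simp [hφdef, h]
      right_inv := by
        intro f; funext j
        simp only [hφdef, Finset.mem_filter, Finset.mem_univ, true_and]
        exact hval (f j) }
  -- cardinality of the kernel
  have hker : Nat.card {S : Finset (Fin k) // P S} = Nat.card ↥(LinearMap.ker L.mulVecLin) := by
    apply Nat.card_congr
    refine (e.subtypeEquiv (q := fun f => L.mulVec f = 0) fun S => by exact key S).trans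
      (Equiv.subtypeEquivRight fun f => ?_)
    simp [LinearMap.mem_ker]
  have hrank : L.rank + Module.finrank (ZMod 2) ↥(LinearMap.ker L.mulVecLin) = k := by
    rw [Matrix.rank]
    have := LinearMap.finrank_range_add_finrank_ker L.mulVecLin
    simpa [Module.finrank_fintype_fun_eq_card] using this
  have hcardker : Nat.card ↥(LinearMap.ker L.mulVecLin)
      = 2 ^ Module.finrank (ZMod 2) ↥(LinearMap.ker L.mulVecLin) := by
    have : Fintype ↥(LinearMap.ker L.mulVecLin) := Fintype.ofFinite _
    rw [Nat.card_eq_fintype_card, Module.card_eq_pow_finrank (K := ZMod 2), ZMod.card]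
  have hrk : r ≤ k := by omega
  have hcard : Nat.card {S : Finset (Fin k) // P S} = 2 ^ (k - r) := by
    rw [hker, hcardker]
    congr 1
    omega
  -- trivial partitions are even
  have Pempty : P (∅ : Finset (Fin k)) := by
    constructor
    · intro v hv; simp at hv
    · intro v _
      have : IsEmpty {w : Fin k // w ∈ (∅ : Finset (Fin k)) ∧ Adj v w} :=
        ⟨fun w => by simpa using w.2.1⟩
      simp [Nat.card_of_isEmpty]
  have Puniv : P (Finset.univ : Finset (Fin k)) := by
    constructor
    · intro v _
      have : IsEmpty {w : Fin k // w ∉ (Finset.univ : Finset (Fin k)) ∧ Adj v w} :=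
        ⟨fun w => w.2.1 (Finset.mem_univ _)⟩
      simp [Nat.card_of_isEmpty]
    · intro v hv; exact absurd (Finset.mem_univ v) hv
  refine ⟨hcard, ?_, ?_⟩
  · -- only trivial implies r = k - 1
    intro htriv
    rcases Nat.eq_zero_or_pos k with hk | hk
    · omega
    have hne : (∅ : Finset (Fin k)) ≠ Finset.univ := by
      intro h
      have : (Fin k) → False := fun v => by
        have := Finset.mem_univ v; rw [← h] at this; simp at this
      exact this ⟨0, hk⟩
    -- lower bound: at least 2
    have h2le : 2 ≤ Nat.card {S : Finset (Fin k) // P S} :=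
      aux_two_le_card ⟨∅, Pempty⟩ ⟨Finset.univ, Puniv⟩ (by simp [Subtype.ext_iff, hne])
    -- upper bound: at most 2
    have hle2 : Nat.card {S : Finset (Fin k) // P S} ≤ 2 := by
      apply aux_card_le_two ⟨∅, Pempty⟩ ⟨Finset.univ, Puniv⟩
      rintro ⟨S, hS⟩
      rcases htriv S hS with h1 | h1
      · left; exact Subtype.ext h1
      · right; exact Subtype.ext h1
    rw [hcard] at h2le hle2
    have : k - r = 1 := by
      rcases Nat.lt_or_ge (k - r) 2 with h | h
      · interval_cases h' : (k - r) <;> omega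
      · have : 2 ^ 2 ≤ 2 ^ (k - r) := Nat.pow_le_pow_right (by norm_num) h
        omega
    omega
  · -- r = k - 1 implies only trivial
    intro hreq S hS
    rcases Nat.eq_zero_or_pos k with hk | hk
    · left
      have : IsEmpty (Fin k) := by rw [hk]; infer_instance
      exact Finset.eq_empty_of_isEmpty S
    by_contra hcon
    push_neg at hcon
    obtain ⟨hS1, hS2⟩ := hcon
    have hne : (∅ : Finset (Fin k)) ≠ Finset.univ := by
      intro h
      have := Finset.mem_univ (⟨0, hk⟩ : Fin k)
      rw [← h] at this; simp at this
    have hkr : k - r = 1 := by omega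
    have hc2 : Nat.card {S : Finset (Fin k) // P S} = 2 := by rw [hcard, hkr]; norm_num
    have h3 : 3 ≤ Nat.card {S : Finset (Fin k) // P S} :=
      aux_three_le_card ⟨∅, Pempty⟩ ⟨Finset.univ, Puniv⟩ ⟨S, hS⟩
        (by simp [Subtype.ext_iff, hne]) (by simp [Subtype.ext_iff, Ne.symm hS1.ne_empty])
        (by simp [Subtype.ext_iff, Ne.symm hS2])
    omega
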